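/- Let (P_n) be strongly invariant for the system (A). The pair (A,P) is exponentially dichotomic (i.e., (h,k)-dichotomic for the rates h_m = e^{αm}, k_m = e^{βm} for some α, β > 0) if and only if there exist a sequence of norms 𝒩 = {|||·|||_n : n ∈ ℕ} compatible with (P_n) and real constants α, β > 0 such that |||A_m^n P_n x|||_m ≤ e^{−α(m−n)}|||P_n x|||_n and |||B_m^n Q_m x|||_n ≤ e^{−β(m−n)}|||Q_m x|||_m for all m ≥ n and all x ∈ X. -/

import Mathlib

open ContinuousLinearMap Filter

noncomputable section

variable {X : Type*} [NormedAddCommGroup X] [NormedSpace ℝ X]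

/-- The evolution operator `A_m^n` associated to the linear difference system
`x_{n+1} = A_n x_n`: `A_m^n = A_{m-1} ⋯ A_n` for `m > n` and `A_n^n = I`. -/
def evol (A : ℕ → X →L[ℝ] X) : ℕ → ℕ → X →L[ℝ] X
  | 0, _ => 1
  | m + 1, n => if m + 1 ≤ n then 1 else A m ∘L evol A m n

/-- `P` is a projectors sequence. -/
def ProjSeq (P : ℕ → X →L[ℝ] X) : Prop := ∀ n, P n ∘L P n = P n

/-- The projectors sequence `P` is invariant for the system `(A)`. -/
def InvariantFor (A P : ℕ → X →L[ℝ] X) : Prop := ∀ n, A n ∘L P n = P (n + 1) ∘L A n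

/-- The projectors sequence `P` is strongly invariant for the system `(A)`: it is invariant and
the restriction of `A_m^n` to `Ker P_n` is an isomorphism from `Ker P_n` onto `Ker P_m`. -/
def StronglyInvariantFor (A P : ℕ → X →L[ℝ] X) : Prop :=
  InvariantFor A P ∧ ∀ m n : ℕ, n ≤ m →
    Set.BijOn (evol A m n) (LinearMap.ker (P n : X →ₗ[ℝ] X) : Set X) (LinearMap.ker (P m : X →ₗ[ℝ] X) : Set X)

/-- A growth rate: an increasing sequence with values in `[1, ∞)` tending to `∞`. -/
def IsGrowthRate (h : ℕ → ℝ) : Prop :=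
  StrictMono h ∧ (∀ n, 1 ≤ h n) ∧ Tendsto h atTop atTop

/-- The pair `(A, P)` is `(h,k)`-dichotomic. -/
def Dichotomic (A P : ℕ → X →L[ℝ] X) (h k : ℕ → ℝ) : Prop :=
  ∃ d : ℕ → ℝ, (∀ n, 1 ≤ d n) ∧ Monotone d ∧
    ∀ m n : ℕ, n ≤ m → ∀ x : X,
      h m * ‖evol A m n (P n x)‖ ≤ d n * (h n * ‖P n x‖) ∧
      k m * ‖(1 - P n) x‖ ≤ d m * (k n * ‖evol A m n ((1 - P n) x)‖)

/-- The pair `(A, P)` is uniformly `(h,k)`-dichotomic. -/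
def UniformDichotomic (A P : ℕ → X →L[ℝ] X) (h k : ℕ → ℝ) : Prop :=
  ∃ d : ℝ, 1 ≤ d ∧
    ∀ m n : ℕ, n ≤ m → ∀ x : X,
      h m * ‖evol A m n (P n x)‖ ≤ d * (h n * ‖P n x‖) ∧
      k m * ‖(1 - P n) x‖ ≤ d * (k n * ‖evol A m n ((1 - P n) x)‖)

/-- The pair `(A, P)` has `(h,k)`-growth. -/
def HasGrowth (A P : ℕ → X →L[ℝ] X) (h k : ℕ → ℝ) : Prop :=
  ∃ g : ℕ → ℝ, (∀ n, 1 ≤ g n) ∧ Monotone g ∧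
    ∀ m n : ℕ, n ≤ m → ∀ x : X,
      h n * ‖evol A m n (P n x)‖ ≤ g n * (h m * ‖P n x‖) ∧
      k n * ‖(1 - P n) x‖ ≤ g m * (k m * ‖evol A m n ((1 - P n) x)‖)

/-- `N` is a sequence of norms on `X`. -/
def IsNormSeq (N : ℕ → X → ℝ) : Prop :=
  ∀ n, (∀ x y, N n (x + y) ≤ N n x + N n y) ∧
    (∀ (a : ℝ) (x : X), N n (a • x) = |a| * N n x) ∧
    (∀ x, N n x = 0 ↔ x = 0)

/-- The sequence of norms `N` is compatible with the projectors sequence `P`. -/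
def NormsCompatible (N : ℕ → X → ℝ) (P : ℕ → X →L[ℝ] X) : Prop :=
  IsNormSeq N ∧ ∃ c : ℕ → ℝ, (∀ n, 1 ≤ c n) ∧ Monotone c ∧
    ∀ (n : ℕ) (x : X), ‖x‖ ≤ N n x ∧ N n x ≤ c n * (‖P n x‖ + ‖(1 - P n) x‖)

/-- The defining properties of the skew-evolution operator `B` associated to the pair `(A, P)`:
`A_m^n B_m^n Q_m = Q_m`, `B_m^n A_m^n Q_n = Q_n` and `B_m^n Q_m = Q_n B_m^n Q_m` for `m ≥ n`,
where `Q_n = I - P_n`. -/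
def SkewEvol (A P : ℕ → X →L[ℝ] X) (B : ℕ → ℕ → X →L[ℝ] X) : Prop :=
  ∀ m n : ℕ, n ≤ m →
    evol A m n ∘L (B m n ∘L (1 - P m)) = 1 - P m ∧
    B m n ∘L (evol A m n ∘L (1 - P n)) = 1 - P n ∧
    B m n ∘L (1 - P m) = (1 - P n) ∘L (B m n ∘L (1 - P m))

/- ### Auxiliary lemmas -/

lemma evol_succ' (A : ℕ → X →L[ℝ] X) (m n : ℕ) :
    evol A (m+1) n = if m + 1 ≤ n then 1 else A m ∘L evol A m n := rfl

lemma evol_self' (A : ℕ → X →L[ℝ] X) (n : ℕ) : evol A n n = 1 := by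
  cases n with
  | zero => rfl
  | succ m => rw [evol_succ', if_pos le_rfl]

lemma evol_succ_of_le' (A : ℕ → X →L[ℝ] X) {m n : ℕ} (h : n ≤ m) :
    evol A (m+1) n = A m ∘L evol A m n := by
  rw [evol_succ', if_neg (by omega)]

lemma evol_comp' (A : ℕ → X →L[ℝ] X) {n m j : ℕ} (hnm : n ≤ m) (hmj : m ≤ j) (x : X) :
    evol A j m (evol A m n x) = evol A j n x := by
  induction j, hmj using Nat.le_induction with
  | base => rw [evol_self']; rfl
  | succ j hj ih =>
    rw [evol_succ_of_le' A hj, evol_succ_of_le' A (hnm.trans hj)]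
    simp only [comp_apply, ih]

lemma projP {P : ℕ → X →L[ℝ] X} (hP : ProjSeq P) (n : ℕ) (x : X) : P n (P n x) = P n x := by
  have := ContinuousLinearMap.ext_iff.mp (hP n) x
  simpa using this

lemma Qapply (P : ℕ → X →L[ℝ] X) (n : ℕ) (x : X) : (1 - P n) x = x - P n x := by
  simp [sub_apply]

lemma PQ_zero {P : ℕ → X →L[ℝ] X} (hP : ProjSeq P) (n : ℕ) (x : X) :
    P n ((1 - P n) x) = 0 := by
  simp [Qapply, map_sub, projP hP]

lemma QQ {P : ℕ → X →L[ℝ] X} (hP : ProjSeq P) (n : ℕ) (x : X) :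
    (1 - P n) ((1 - P n) x) = (1 - P n) x := by
  rw [Qapply, PQ_zero hP, sub_zero]

lemma QP_zero {P : ℕ → X →L[ℝ] X} (hP : ProjSeq P) (n : ℕ) (x : X) :
    (1 - P n) (P n x) = 0 := by
  rw [Qapply, projP hP, sub_self]

lemma evol_P' {A P : ℕ → X →L[ℝ] X} (hI : InvariantFor A P) {n m : ℕ} (h : n ≤ m) (x : X) :
    evol A m n (P n x) = P m (evol A m n x) := by
  induction m, h using Nat.le_induction with
  | base => rw [evol_self']; rfl
  | succ m hm ih =>
    rw [evol_succ_of_le' A hm]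
    simp only [comp_apply, ih]
    have h2 := ContinuousLinearMap.ext_iff.mp (hI m) (evol A m n x)
    simpa using h2

lemma skew_apply₁ {A P : ℕ → X →L[ℝ] X} {B : ℕ → ℕ → X →L[ℝ] X} (hB : SkewEvol A P B)
    {m n : ℕ} (h : n ≤ m) (x : X) :
    evol A m n (B m n ((1 - P m) x)) = (1 - P m) x := by
  have := ContinuousLinearMap.ext_iff.mp (hB m n h).1 x
  simpa only [comp_apply] using this

lemma skew_apply₂ {A P : ℕ → X →L[ℝ] X} {B : ℕ → ℕ → X →L[ℝ] X} (hB : SkewEvol A P B)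
    {m n : ℕ} (h : n ≤ m) (x : X) :
    B m n (evol A m n ((1 - P n) x)) = (1 - P n) x := by
  have := ContinuousLinearMap.ext_iff.mp (hB m n h).2.1 x
  simpa only [comp_apply] using this

lemma skew_apply₃ {A P : ℕ → X →L[ℝ] X} {B : ℕ → ℕ → X →L[ℝ] X} (hB : SkewEvol A P B)
    {m n : ℕ} (h : n ≤ m) (x : X) :
    B m n ((1 - P m) x) = (1 - P n) (B m n ((1 - P m) x)) := by
  have := ContinuousLinearMap.ext_iff.mp (hB m n h).2.2 x
  simpa only [comp_apply] using this

lemma B_ker {A P : ℕ → X →L[ℝ] X} {B : ℕ → ℕ → X →L[ℝ] X} (hP : ProjSeq P)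
    (hB : SkewEvol A P B) {m n : ℕ} (h : n ≤ m) (x : X) :
    P n (B m n ((1 - P m) x)) = 0 := by
  rw [skew_apply₃ hB h, PQ_zero hP]

lemma B_self {A P : ℕ → X →L[ℝ] X} {B : ℕ → ℕ → X →L[ℝ] X} (hB : SkewEvol A P B)
    (n : ℕ) (x : X) : B n n ((1 - P n) x) = (1 - P n) x := by
  have := skew_apply₂ hB (le_refl n) x
  rwa [evol_self', one_apply_eq_self] at this

lemma B_comp {A P : ℕ → X →L[ℝ] X} {B : ℕ → ℕ → X →L[ℝ] X} (hP : ProjSeq P)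
    (hSI : StronglyInvariantFor A P) (hB : SkewEvol A P B)
    {k n m : ℕ} (hkn : k ≤ n) (hnm : n ≤ m) (x : X) :
    B n k ((1 - P n) (B m n ((1 - P m) x))) = B m k ((1 - P m) x) := by
  have hkm : k ≤ m := hkn.trans hnm
  set y := B m n ((1 - P m) x) with hy
  have hyq : (1 - P n) y = y := (skew_apply₃ hB hnm x).symm
  have huker : P k (B n k ((1 - P n) y)) = 0 := B_ker hP hB hkn y
  have hvker : P k (B m k ((1 - P m) x)) = 0 := B_ker hP hB hkm x
  have h1 : evol A m k (B n k ((1 - P n) y)) = (1 - P m) x := by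
    rw [← evol_comp' A hkn hnm, skew_apply₁ hB hkn y, hyq, hy, skew_apply₁ hB hnm x]
  have h2 : evol A m k (B m k ((1 - P m) x)) = (1 - P m) x := skew_apply₁ hB hkm x
  have hinj := (hSI.2 m k hkm).injOn
  have hmem : ∀ z : X, P k z = 0 → z ∈ (LinearMap.ker (P k : X →ₗ[ℝ] X) : Set X) := by
    intro z hz
    simp only [SetLike.mem_coe, LinearMap.mem_ker, ContinuousLinearMap.coe_coe]
    exact hz
  apply hinj (hmem _ huker) (hmem _ hvker)
  rw [h1, h2]

/-- The first component of the Lyapunov norm. -/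
def LS1 (A P : ℕ → X →L[ℝ] X) (α : ℝ) (n : ℕ) (x : X) : ℝ :=
  sSup ((fun m : ℕ => Real.exp (α * ((m : ℝ) - (n : ℝ))) * ‖evol A m n (P n x)‖) '' Set.Ici n)

/-- The second component of the Lyapunov norm. -/
def LS2 (P : ℕ → X →L[ℝ] X) (B : ℕ → ℕ → X →L[ℝ] X) (β : ℝ) (n : ℕ) (x : X) : ℝ :=
  sSup ((fun k : ℕ => Real.exp (β * ((n : ℝ) - (k : ℝ))) * ‖B n k ((1 - P n) x)‖) '' Set.Iic n)

theorem stmt_7 [CompleteSpace X] (A P : ℕ → X →L[ℝ] X) (B : ℕ → ℕ → X →L[ℝ] X)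
    (hP : ProjSeq P) (hSI : StronglyInvariantFor A P) (hB : SkewEvol A P B) :
    (∃ α β : ℝ, 0 < α ∧ 0 < β ∧
      Dichotomic A P (fun m => Real.exp (α * m)) (fun m => Real.exp (β * m))) ↔
      ∃ N : ℕ → X → ℝ, NormsCompatible N P ∧ ∃ α β : ℝ, 0 < α ∧ 0 < β ∧
        ∀ m n : ℕ, n ≤ m → ∀ x : X,
          N m (evol A m n (P n x)) ≤ Real.exp (-α * ((m : ℝ) - n)) * N n (P n x) ∧
          N n (B m n ((1 - P m) x)) ≤ Real.exp (-β * ((m : ℝ) - n)) * N m ((1 - P m) x) := by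
  constructor
  · rintro ⟨α, β, hα, hβ, d, hd1, hdm, hdich⟩
    have hd0 : ∀ n, (0:ℝ) ≤ d n := fun n => zero_le_one.trans (hd1 n)
    have hdichP : ∀ m n : ℕ, n ≤ m → ∀ x : X,
        Real.exp (α * (m:ℝ)) * ‖evol A m n (P n x)‖ ≤ d n * (Real.exp (α * (n:ℝ)) * ‖P n x‖) :=
      fun m n h x => (hdich m n h x).1
    have hdichQ : ∀ m n : ℕ, n ≤ m → ∀ x : X,
        Real.exp (β * (m:ℝ)) * ‖(1 - P n) x‖ ≤
          d m * (Real.exp (β * (n:ℝ)) * ‖evol A m n ((1 - P n) x)‖) :=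
      fun m n h x => (hdich m n h x).2
    -- term bounds
    have term1_le : ∀ (n : ℕ) (x : X) (m : ℕ), n ≤ m →
        Real.exp (α * ((m:ℝ) - n)) * ‖evol A m n (P n x)‖ ≤ d n * ‖P n x‖ := by
      intro n x m hm
      have h1 := hdichP m n hm x
      have e : Real.exp (α * ((m:ℝ) - n)) = Real.exp (α * m) / Real.exp (α * n) := by
        rw [← Real.exp_sub]; congr 1; ring
      rw [e, div_mul_eq_mul_div, div_le_iff₀ (Real.exp_pos _)]
      calc Real.exp (α * m) * ‖evol A m n (P n x)‖
          ≤ d n * (Real.exp (α * n) * ‖P n x‖) := h1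
        _ = d n * ‖P n x‖ * Real.exp (α * n) := by ring
    have term2_le : ∀ (n : ℕ) (x : X) (k : ℕ), k ≤ n →
        Real.exp (β * ((n:ℝ) - k)) * ‖B n k ((1 - P n) x)‖ ≤ d n * ‖(1 - P n) x‖ := by
      intro n x k hk
      have h1 := hdichQ n k hk (B n k ((1 - P n) x))
      rw [← skew_apply₃ hB hk x, skew_apply₁ hB hk x] at h1
      have e : Real.exp (β * ((n:ℝ) - k)) = Real.exp (β * n) / Real.exp (β * k) := by
        rw [← Real.exp_sub]; congr 1; ring
      rw [e, div_mul_eq_mul_div, div_le_iff₀ (Real.exp_pos _)]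
      calc Real.exp (β * n) * ‖B n k ((1 - P n) x)‖
          ≤ d n * (Real.exp (β * k) * ‖(1 - P n) x‖) := h1
        _ = d n * ‖(1 - P n) x‖ * Real.exp (β * k) := by ring
    -- sSup interface
    have le1 : ∀ (n : ℕ) (x : X) {m : ℕ}, n ≤ m →
        Real.exp (α * ((m:ℝ) - n)) * ‖evol A m n (P n x)‖ ≤ LS1 A P α n x := by
      intro n x m hm
      exact le_csSup ⟨d n * ‖P n x‖, by rintro t ⟨j, hj, rfl⟩; exact term1_le n x j hj⟩
        ⟨m, hm, rfl⟩
    have le2 : ∀ (n : ℕ) (x : X) {k : ℕ}, k ≤ n →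
        Real.exp (β * ((n:ℝ) - k)) * ‖B n k ((1 - P n) x)‖ ≤ LS2 P B β n x := by
      intro n x k hk
      exact le_csSup ⟨d n * ‖(1 - P n) x‖, by rintro t ⟨j, hj, rfl⟩; exact term2_le n x j hj⟩
        ⟨k, hk, rfl⟩
    have S1le : ∀ (n : ℕ) (x : X) (M : ℝ), 0 ≤ M →
        (∀ m, n ≤ m → Real.exp (α * ((m:ℝ) - n)) * ‖evol A m n (P n x)‖ ≤ M) →
        LS1 A P α n x ≤ M := by
      intro n x M hM h
      exact Real.sSup_le (by rintro t ⟨m, hm, rfl⟩; exact h m hm) hM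
    have S2le : ∀ (n : ℕ) (x : X) (M : ℝ), 0 ≤ M →
        (∀ k, k ≤ n → Real.exp (β * ((n:ℝ) - k)) * ‖B n k ((1 - P n) x)‖ ≤ M) →
        LS2 P B β n x ≤ M := by
      intro n x M hM h
      exact Real.sSup_le (by rintro t ⟨k, hk, rfl⟩; exact h k hk) hM
    have S1nn : ∀ (n : ℕ) (x : X), 0 ≤ LS1 A P α n x :=
      fun n x => le_trans (by positivity) (le1 n x le_rfl)
    have S2nn : ∀ (n : ℕ) (x : X), 0 ≤ LS2 P B β n x :=
      fun n x => le_trans (by positivity) (le2 n x le_rfl)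
    have S1ub : ∀ (n : ℕ) (x : X), LS1 A P α n x ≤ d n * ‖P n x‖ :=
      fun n x => S1le n x _ (mul_nonneg (hd0 n) (norm_nonneg _)) (term1_le n x)
    have S2ub : ∀ (n : ℕ) (x : X), LS2 P B β n x ≤ d n * ‖(1 - P n) x‖ :=
      fun n x => S2le n x _ (mul_nonneg (hd0 n) (norm_nonneg _)) (term2_le n x)
    have normP_le : ∀ (n : ℕ) (x : X), ‖P n x‖ ≤ LS1 A P α n x := by
      intro n x
      have h := le1 n x (le_refl n)
      rw [sub_self, mul_zero, Real.exp_zero, one_mul, evol_self', one_apply_eq_self] at h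
      exact h
    have normQ_le : ∀ (n : ℕ) (x : X), ‖(1 - P n) x‖ ≤ LS2 P B β n x := by
      intro n x
      have h := le2 n x (le_refl n)
      rw [sub_self, mul_zero, Real.exp_zero, one_mul, B_self hB] at h
      exact h
    have norm_le_N : ∀ (n : ℕ) (x : X), ‖x‖ ≤ LS1 A P α n x + LS2 P B β n x := by
      intro n x
      have hsum : P n x + (1 - P n) x = x := by rw [Qapply]; abel
      calc ‖x‖ = ‖P n x + (1 - P n) x‖ := by rw [hsum]
        _ ≤ ‖P n x‖ + ‖(1 - P n) x‖ := norm_add_le _ _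
        _ ≤ _ := add_le_add (normP_le n x) (normQ_le n x)
    have S1zero : ∀ n : ℕ, LS1 A P α n 0 = 0 :=
      fun n => le_antisymm (S1le n 0 0 le_rfl (fun m _ => by simp)) (S1nn n 0)
    have S2zero : ∀ n : ℕ, LS2 P B β n 0 = 0 :=
      fun n => le_antisymm (S2le n 0 0 le_rfl (fun k _ => by simp)) (S2nn n 0)
    have Nsmul_le : ∀ (n : ℕ) (a : ℝ) (x : X),
        LS1 A P α n (a • x) + LS2 P B β n (a • x)
          ≤ |a| * (LS1 A P α n x + LS2 P B β n x) := by
      intro n a x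
      have h1 : LS1 A P α n (a • x) ≤ |a| * LS1 A P α n x := by
        apply S1le n _ _ (mul_nonneg (abs_nonneg a) (S1nn n x))
        intro m hm
        have e : evol A m n (P n (a • x)) = a • evol A m n (P n x) := by
          rw [map_smul, map_smul]
        rw [e, norm_smul, Real.norm_eq_abs]
        calc Real.exp (α * ((m:ℝ) - n)) * (|a| * ‖evol A m n (P n x)‖)
            = |a| * (Real.exp (α * ((m:ℝ) - n)) * ‖evol A m n (P n x)‖) := by ring
          _ ≤ |a| * LS1 A P α n x := mul_le_mul_of_nonneg_left (le1 n x hm) (abs_nonneg a)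
      have h2 : LS2 P B β n (a • x) ≤ |a| * LS2 P B β n x := by
        apply S2le n _ _ (mul_nonneg (abs_nonneg a) (S2nn n x))
        intro k hk
        have e : B n k ((1 - P n) (a • x)) = a • B n k ((1 - P n) x) := by
          rw [map_smul, map_smul]
        rw [e, norm_smul, Real.norm_eq_abs]
        calc Real.exp (β * ((n:ℝ) - k)) * (|a| * ‖B n k ((1 - P n) x)‖)
            = |a| * (Real.exp (β * ((n:ℝ) - k)) * ‖B n k ((1 - P n) x)‖) := by ring
          _ ≤ |a| * LS2 P B β n x := mul_le_mul_of_nonneg_left (le2 n x hk) (abs_nonneg a)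
      linarith
    have Nsmul : ∀ (n : ℕ) (a : ℝ) (x : X),
        LS1 A P α n (a • x) + LS2 P B β n (a • x)
          = |a| * (LS1 A P α n x + LS2 P B β n x) := by
      intro n a x
      rcases eq_or_ne a 0 with rfl | ha
      · rw [zero_smul, S1zero, S2zero, abs_zero, zero_mul, add_zero]
      · refine le_antisymm (Nsmul_le n a x) ?_
        have h2 := Nsmul_le n a⁻¹ (a • x)
        rw [inv_smul_smul₀ ha] at h2
        have h3 := mul_le_mul_of_nonneg_left h2 (abs_nonneg a)
        calc |a| * (LS1 A P α n x + LS2 P B β n x)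
            ≤ |a| * (|a⁻¹| * (LS1 A P α n (a • x) + LS2 P B β n (a • x))) := h3
          _ = LS1 A P α n (a • x) + LS2 P B β n (a • x) := by
              rw [abs_inv, ← mul_assoc, mul_inv_cancel₀ (abs_ne_zero.mpr ha), one_mul]
    refine ⟨fun n x => LS1 A P α n x + LS2 P B β n x, ⟨?_, d, hd1, hdm, ?_⟩,
      α, β, hα, hβ, ?_⟩
    · -- IsNormSeq
      intro n
      refine ⟨?_, fun a x => Nsmul n a x, ?_⟩
      · intro x y
        have t1 : LS1 A P α n (x + y) ≤ LS1 A P α n x + LS1 A P α n y := by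
          apply S1le n _ _ (add_nonneg (S1nn n x) (S1nn n y))
          intro m hm
          have e : evol A m n (P n (x + y)) = evol A m n (P n x) + evol A m n (P n y) := by
            rw [map_add, map_add]
          calc Real.exp (α * ((m:ℝ) - n)) * ‖evol A m n (P n (x + y))‖
              ≤ Real.exp (α * ((m:ℝ) - n)) * (‖evol A m n (P n x)‖ + ‖evol A m n (P n y)‖) := by
                rw [e]; exact mul_le_mul_of_nonneg_left (norm_add_le _ _) (Real.exp_pos _).le
            _ = Real.exp (α * ((m:ℝ) - n)) * ‖evol A m n (P n x)‖
                + Real.exp (α * ((m:ℝ) - n)) * ‖evol A m n (P n y)‖ := by ring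
            _ ≤ LS1 A P α n x + LS1 A P α n y := add_le_add (le1 n x hm) (le1 n y hm)
        have t2 : LS2 P B β n (x + y) ≤ LS2 P B β n x + LS2 P B β n y := by
          apply S2le n _ _ (add_nonneg (S2nn n x) (S2nn n y))
          intro k hk
          have e : B n k ((1 - P n) (x + y)) = B n k ((1 - P n) x) + B n k ((1 - P n) y) := by
            rw [map_add, map_add]
          calc Real.exp (β * ((n:ℝ) - k)) * ‖B n k ((1 - P n) (x + y))‖
              ≤ Real.exp (β * ((n:ℝ) - k)) * (‖B n k ((1 - P n) x)‖ + ‖B n k ((1 - P n) y)‖) := by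
                rw [e]; exact mul_le_mul_of_nonneg_left (norm_add_le _ _) (Real.exp_pos _).le
            _ = Real.exp (β * ((n:ℝ) - k)) * ‖B n k ((1 - P n) x)‖
                + Real.exp (β * ((n:ℝ) - k)) * ‖B n k ((1 - P n) y)‖ := by ring
            _ ≤ LS2 P B β n x + LS2 P B β n y := add_le_add (le2 n x hk) (le2 n y hk)
        show LS1 A P α n (x + y) + LS2 P B β n (x + y)
          ≤ (LS1 A P α n x + LS2 P B β n x) + (LS1 A P α n y + LS2 P B β n y)
        linarith
      · intro x
        show LS1 A P α n x + LS2 P B β n x = 0 ↔ x = 0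
        constructor
        · intro h
          have h2 := norm_le_N n x
          rw [h] at h2
          exact norm_le_zero_iff.mp h2
        · rintro rfl
          rw [S1zero, S2zero, add_zero]
    · -- compatibility bounds
      intro n x
      refine ⟨norm_le_N n x, ?_⟩
      show LS1 A P α n x + LS2 P B β n x ≤ d n * (‖P n x‖ + ‖(1 - P n) x‖)
      calc LS1 A P α n x + LS2 P B β n x
          ≤ d n * ‖P n x‖ + d n * ‖(1 - P n) x‖ := add_le_add (S1ub n x) (S2ub n x)
        _ = d n * (‖P n x‖ + ‖(1 - P n) x‖) := (mul_add _ _ _).symm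
    · -- decay estimates
      intro m n hmn x
      constructor
      · show LS1 A P α m (evol A m n (P n x)) + LS2 P B β m (evol A m n (P n x))
          ≤ Real.exp (-α * ((m:ℝ) - n)) * (LS1 A P α n (P n x) + LS2 P B β n (P n x))
        have hPz : P m (evol A m n (P n x)) = evol A m n (P n x) := by
          rw [evol_P' hSI.1 hmn x, projP hP]
        have hQz : (1 - P m) (evol A m n (P n x)) = 0 := by
          rw [Qapply, hPz, sub_self]
        have h2 : LS2 P B β m (evol A m n (P n x)) ≤ 0 :=
          S2le m _ 0 le_rfl (fun k _ => by rw [hQz, map_zero, norm_zero, mul_zero])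
        have h1 : LS1 A P α m (evol A m n (P n x))
            ≤ Real.exp (-α * ((m:ℝ) - n)) * LS1 A P α n (P n x) := by
          apply S1le m _ _ (mul_nonneg (Real.exp_pos _).le (S1nn n (P n x)))
          intro j hj
          have e1 : evol A j m (P m (evol A m n (P n x))) = evol A j n (P n (P n x)) := by
            rw [hPz, evol_comp' A hmn hj, projP hP]
          rw [e1]
          have e2 : Real.exp (α * ((j:ℝ) - m))
              = Real.exp (-α * ((m:ℝ) - n)) * Real.exp (α * ((j:ℝ) - n)) := by
            rw [← Real.exp_add]; congr 1; ring
          rw [e2, mul_assoc]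
          exact mul_le_mul_of_nonneg_left (le1 n (P n x) (hmn.trans hj)) (Real.exp_pos _).le
        have h3 : 0 ≤ LS2 P B β n (P n x) := S2nn _ _
        have h4 : 0 ≤ Real.exp (-α * ((m:ℝ) - n)) * LS2 P B β n (P n x) :=
          mul_nonneg (Real.exp_pos _).le h3
        have h5 := mul_add (Real.exp (-α * ((m:ℝ) - n))) (LS1 A P α n (P n x))
          (LS2 P B β n (P n x))
        linarith
      · show LS1 A P α n (B m n ((1 - P m) x)) + LS2 P B β n (B m n ((1 - P m) x))
          ≤ Real.exp (-β * ((m:ℝ) - n)) * (LS1 A P α m ((1 - P m) x) + LS2 P B β m ((1 - P m) x))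
        have hPy : P n (B m n ((1 - P m) x)) = 0 := B_ker hP hB hmn x
        have h1 : LS1 A P α n (B m n ((1 - P m) x)) ≤ 0 :=
          S1le n _ 0 le_rfl (fun j _ => by rw [hPy, map_zero, norm_zero, mul_zero])
        have h2 : LS2 P B β n (B m n ((1 - P m) x))
            ≤ Real.exp (-β * ((m:ℝ) - n)) * LS2 P B β m ((1 - P m) x) := by
          apply S2le n _ _ (mul_nonneg (Real.exp_pos _).le (S2nn m ((1 - P m) x)))
          intro k hk
          have e1 : B n k ((1 - P n) (B m n ((1 - P m) x)))
              = B m k ((1 - P m) ((1 - P m) x)) := by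
            rw [B_comp hP hSI hB hk hmn x, QQ hP]
          rw [e1]
          have e2 : Real.exp (β * ((n:ℝ) - k))
              = Real.exp (-β * ((m:ℝ) - n)) * Real.exp (β * ((m:ℝ) - k)) := by
            rw [← Real.exp_add]; congr 1; ring
          rw [e2, mul_assoc]
          exact mul_le_mul_of_nonneg_left (le2 m ((1 - P m) x) (hk.trans hmn))
            (Real.exp_pos _).le
        have h3 : 0 ≤ LS1 A P α m ((1 - P m) x) := S1nn _ _
        have h4 : 0 ≤ Real.exp (-β * ((m:ℝ) - n)) * LS1 A P α m ((1 - P m) x) :=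
          mul_nonneg (Real.exp_pos _).le h3
        have h5 := mul_add (Real.exp (-β * ((m:ℝ) - n))) (LS1 A P α m ((1 - P m) x))
          (LS2 P B β m ((1 - P m) x))
        linarith
  · rintro ⟨N, ⟨hNseq, c, hc1, hcm, hcbd⟩, α, β, hα, hβ, hdec⟩
    refine ⟨α, β, hα, hβ, c, hc1, hcm, fun m n hmn x => ⟨?_, ?_⟩⟩
    · show Real.exp (α * (m:ℝ)) * ‖evol A m n (P n x)‖
        ≤ c n * (Real.exp (α * (n:ℝ)) * ‖P n x‖)
      have k1 : ‖evol A m n (P n x)‖ ≤ Real.exp (-α * ((m:ℝ) - n)) * (c n * ‖P n x‖) := by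
        have s1 := (hcbd m (evol A m n (P n x))).1
        have s2 := (hdec m n hmn x).1
        have s3 := (hcbd n (P n x)).2
        rw [projP hP, QP_zero hP, norm_zero, add_zero] at s3
        calc ‖evol A m n (P n x)‖ ≤ N m (evol A m n (P n x)) := s1
          _ ≤ Real.exp (-α * ((m:ℝ) - n)) * N n (P n x) := s2
          _ ≤ Real.exp (-α * ((m:ℝ) - n)) * (c n * ‖P n x‖) :=
              mul_le_mul_of_nonneg_left s3 (Real.exp_pos _).le
      calc Real.exp (α * (m:ℝ)) * ‖evol A m n (P n x)‖
          ≤ Real.exp (α * (m:ℝ)) * (Real.exp (-α * ((m:ℝ) - n)) * (c n * ‖P n x‖)) :=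
            mul_le_mul_of_nonneg_left k1 (Real.exp_pos _).le
        _ = (Real.exp (α * (m:ℝ)) * Real.exp (-α * ((m:ℝ) - n))) * (c n * ‖P n x‖) := by ring
        _ = Real.exp (α * (n:ℝ)) * (c n * ‖P n x‖) := by
            rw [← Real.exp_add, show α * (m:ℝ) + -α * ((m:ℝ) - n) = α * (n:ℝ) by ring]
        _ = c n * (Real.exp (α * (n:ℝ)) * ‖P n x‖) := by ring
    · show Real.exp (β * (m:ℝ)) * ‖(1 - P n) x‖
        ≤ c m * (Real.exp (β * (n:ℝ)) * ‖evol A m n ((1 - P n) x)‖)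
      have hPy : P m (evol A m n ((1 - P n) x)) = 0 := by
        rw [← evol_P' hSI.1 hmn, PQ_zero hP, map_zero]
      have hQy : (1 - P m) (evol A m n ((1 - P n) x)) = evol A m n ((1 - P n) x) := by
        rw [Qapply, hPy, sub_zero]
      have hBy : B m n ((1 - P m) (evol A m n ((1 - P n) x))) = (1 - P n) x := by
        rw [hQy]; exact skew_apply₂ hB hmn x
      have k2 : ‖(1 - P n) x‖
          ≤ Real.exp (-β * ((m:ℝ) - n)) * (c m * ‖evol A m n ((1 - P n) x)‖) := by
        have s1 := (hcbd n ((1 - P n) x)).1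
        have s2 := (hdec m n hmn (evol A m n ((1 - P n) x))).2
        rw [hBy, hQy] at s2
        have s3 := (hcbd m (evol A m n ((1 - P n) x))).2
        rw [hPy, norm_zero, zero_add, hQy] at s3
        calc ‖(1 - P n) x‖ ≤ N n ((1 - P n) x) := s1
          _ ≤ Real.exp (-β * ((m:ℝ) - n)) * N m (evol A m n ((1 - P n) x)) := s2
          _ ≤ Real.exp (-β * ((m:ℝ) - n)) * (c m * ‖evol A m n ((1 - P n) x)‖) :=
              mul_le_mul_of_nonneg_left s3 (Real.exp_pos _).le
      calc Real.exp (β * (m:ℝ)) * ‖(1 - P n) x‖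
          ≤ Real.exp (β * (m:ℝ))
            * (Real.exp (-β * ((m:ℝ) - n)) * (c m * ‖evol A m n ((1 - P n) x)‖)) :=
            mul_le_mul_of_nonneg_left k2 (Real.exp_pos _).le
        _ = (Real.exp (β * (m:ℝ)) * Real.exp (-β * ((m:ℝ) - n)))
            * (c m * ‖evol A m n ((1 - P n) x)‖) := by ring
        _ = Real.exp (β * (n:ℝ)) * (c m * ‖evol A m n ((1 - P n) x)‖) := by
            rw [← Real.exp_add, show β * (m:ℝ) + -β * ((m:ℝ) - n) = β * (n:ℝ) by ring]
        _ = c m * (Real.exp (β * (n:ℝ)) * ‖evol A m n ((1 - P n) x)‖) := by ring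
  end
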